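/- Let X be the algebraic toric set parameterized by the monomials arising from the edges of a clutter, and let A be the n × s matrix with columns v_1,...,v_s. Then the vanishing ideal I(X) equals the ideal of S generated by the binomials t^{a^+} - t^{a^-} (a ∈ Z^s) such that A a^+ ≡ A a^- (mod q-1) componentwise and |a^+| = |a^-|. -/

import Mathlib

noncomputable section

open scoped BigOperators

/-- The vanishing ideal `I(Y)` of a set `Y` of points in projective space: the ideal
generated by the homogeneous polynomials vanishing at every point of `Y`. -/
def vanishingIdeal (K : Type*) [Field K] {s : ℕ}
    (Y : Set (Projectivization K (Fin s → K))) : Ideal (MvPolynomial (Fin s) K) :=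
  Ideal.span {f | (∃ d, f.IsHomogeneous d) ∧ ∀ P ∈ Y, MvPolynomial.eval P.rep f = 0}

/-- The Hilbert function `d ↦ dim_K (S/I)_d` of the standard graded quotient `S/I`. -/
def hilbertFunction {K : Type*} [Field K] {s : ℕ}
    (I : Ideal (MvPolynomial (Fin s) K)) (d : ℕ) : ℕ :=
  Module.finrank K ((MvPolynomial.homogeneousSubmodule (Fin s) K d).map
    (Ideal.Quotient.mkₐ K I).toLinearMap)

/-- The index of regularity of `S/I(Y)`: the least `p ≥ 0` such that
`H_Y(d) = |Y|` for all `d ≥ p`. -/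
def regIndex {K : Type*} [Field K] {s : ℕ}
    (Y : Set (Projectivization K (Fin s → K))) : ℕ :=
  sInf {p : ℕ | ∀ d, p ≤ d → hilbertFunction (vanishingIdeal K Y) d = Y.ncard}

/-- The algebraic toric set in `P^{s-1}` parameterized by the monomials `y^{v_1},…,y^{v_s}`. -/
def toricSet (K : Type*) [Field K] {n s : ℕ} (v : Fin s → Fin n → ℕ) :
    Set (Projectivization K (Fin s → K)) :=
  {P | ∃ x : Fin n → K, (∀ j, x j ≠ 0) ∧
      ∃ h : (fun i : Fin s => ∏ j, x j ^ v i j) ≠ 0,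
        P = Projectivization.mk K (fun i : Fin s => ∏ j, x j ^ v i j) h}

/-- The projective torus in `P^{s-1}`: the points all of whose coordinates are nonzero. -/
def projTorus (K : Type*) [Field K] (s : ℕ) : Set (Projectivization K (Fin s → K)) :=
  {P | ∀ i, P.rep i ≠ 0}

/-- The parameterized (evaluation) code `C_Y(d)`: the image of the degree-`d` evaluation map
`f ↦ (f(P)/t_1^d(P))_{P ∈ Y}`. -/
def evalCode (K : Type*) [Field K] {s : ℕ} [NeZero s]
    (Y : Set (Projectivization K (Fin s → K))) (d : ℕ) : Set (Y → K) :=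
  {w | ∃ f ∈ MvPolynomial.homogeneousSubmodule (Fin s) K d,
      w = fun P : Y => MvPolynomial.eval (P : Projectivization K (Fin s → K)).rep f /
        ((P : Projectivization K (Fin s → K)).rep 0) ^ d}

/-- The minimum distance of a code: the least number of nonzero entries of a
nonzero codeword. -/
def minDist {K : Type*} [Field K] {ι : Type*} (C : Set (ι → K)) : ℕ :=
  sInf {m | ∃ w ∈ C, w ≠ 0 ∧ m = {i | w i ≠ 0}.ncard}

/-- `v 1,…,v s` are the characteristic vectors of the edges of a clutter: all the entries
are in `{0,1}` and no edge (support) is contained in another. -/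
def IsClutter {n s : ℕ} (v : Fin s → Fin n → ℕ) : Prop :=
  (∀ i j, v i j ≤ 1) ∧ ∀ i k : Fin s, i ≠ k → ∃ j, v i j ≠ 0 ∧ v k j = 0

/-- An ideal of `K[t_1,…,t_s]` is a complete intersection if it can be generated by `s-1`
homogeneous polynomials. -/
def IsCompleteIntersection {K : Type*} [Field K] {s : ℕ}
    (I : Ideal (MvPolynomial (Fin s) K)) : Prop :=
  ∃ g : Fin (s - 1) → MvPolynomial (Fin s) K,
    (∀ i, ∃ d, (g i).IsHomogeneous d) ∧ Ideal.span (Set.range g) = I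

end

open MvPolynomial Finset


open MvPolynomial Finset

lemma aux_pow_mod {K : Type*} [Field K] [Fintype K] {q : ℕ}
    (hq : Fintype.card K = q) {x : K} (hx : x ≠ 0) (m : ℕ) :
    x ^ m = x ^ (m % (q - 1)) := by
  conv_lhs => rw [← Nat.div_add_mod m (q - 1)]
  rw [pow_add, pow_mul, ← hq, FiniteField.pow_card_sub_one_eq_one x hx, one_pow, one_mul]

lemma aux_pow_eq {K : Type*} [Field K] [Fintype K] {q : ℕ}
    (hq : Fintype.card K = q) {x : K} (hx : x ≠ 0) {m m' : ℕ}
    (h : (m : ZMod (q - 1)) = (m' : ZMod (q - 1))) : x ^ m = x ^ m' := by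
  rw [aux_pow_mod hq hx m, aux_pow_mod hq hx m',
    (ZMod.natCast_eq_natCast_iff' m m' (q - 1)).1 h]

lemma aux_deg {K : Type*} [Field K] {s : ℕ} {f : MvPolynomial (Fin s) K} {d : ℕ}
    (hf : f.IsHomogeneous d) {c : Fin s →₀ ℕ} (hc : c ∈ f.support) :
    ∑ i, c i = d := by
  have h1 : c.degree = d := by
    by_contra h
    exact (MvPolynomial.mem_support_iff.1 hc) (hf.coeff_eq_zero h)
  rw [← h1, Finsupp.degree]
  exact (Finset.sum_subset (Finset.subset_univ _)
    (fun i _ hi => Finsupp.notMem_support_iff.mp hi)).symm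

lemma aux_prod_scale {K : Type*} [Field K] {s : ℕ} (u : K) (y : Fin s → K)
    (c : Fin s → ℕ) : ∏ i, (u * y i) ^ c i = u ^ (∑ i, c i) * ∏ i, y i ^ c i := by
  simp_rw [mul_pow]
  rw [Finset.prod_mul_distrib, Finset.prod_pow_eq_pow_sum]

lemma aux_eval_smul {K : Type*} [Field K] {s : ℕ} {f : MvPolynomial (Fin s) K} {d : ℕ}
    (hf : f.IsHomogeneous d) (u : K) (y : Fin s → K) :
    eval (fun i => u * y i) f = u ^ d * eval y f := by
  rw [eval_eq', eval_eq', Finset.mul_sum]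
  refine Finset.sum_congr rfl fun c hc => ?_
  rw [aux_prod_scale, aux_deg hf hc]
  ring

-- evaluation of a pure power product at the parameterized point
lemma aux_eval_param {K : Type*} [Field K] {n s : ℕ} (v : Fin s → Fin n → ℕ)
    (x : Fin n → K) (e : Fin s → ℕ) :
    ∏ i, (∏ j, x j ^ v i j) ^ e i = ∏ j, x j ^ (∑ i, e i * v i j) := by
  simp_rw [← Finset.prod_pow, ← pow_mul]
  rw [Finset.prod_comm]
  simp_rw [Finset.prod_pow_eq_pow_sum]
  exact Finset.prod_congr rfl fun j _ => by rw [Finset.sum_congr rfl fun i _ => by rw [mul_comm]]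

open Finset

def auxChi {K : Type*} [Field K] (n m : ℕ) (b : Fin n → ZMod m) : (Fin n → Kˣ) →* K where
  toFun x := ∏ j, ((x j : K)) ^ (b j).val
  map_one' := by simp
  map_mul' x y := by simp [mul_pow, Finset.prod_mul_distrib]

@[simp] lemma auxChi_apply {K : Type*} [Field K] {n m : ℕ} (b : Fin n → ZMod m)
    (x : Fin n → Kˣ) : auxChi (K := K) n m b x = ∏ j, ((x j : K)) ^ (b j).val := rfl

lemma auxChi_update {K : Type*} [Field K] {n m : ℕ} (b : Fin n → ZMod m)
    (j : Fin n) (g : Kˣ) :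
    auxChi n m b (Function.update (1 : Fin n → Kˣ) j g) = (g : K) ^ (b j).val := by
  show ∏ j', ((Function.update (1 : Fin n → Kˣ) j g j' : Kˣ) : K) ^ (b j').val = _
  rw [Finset.prod_eq_single j]
  · rw [Function.update_self]
  · intro j' _ hj'
    rw [Function.update_of_ne hj', Pi.one_apply, Units.val_one, one_pow]
  · exact fun h => absurd (Finset.mem_univ j) h

lemma auxChi_inj {K : Type*} [Field K] [Fintype K] {q n : ℕ}
    (hq : Fintype.card K = q) (h2 : 2 ≤ q) :
    Function.Injective (fun b : Fin n → ZMod (q - 1) => ⇑(auxChi (K := K) n (q - 1) b)) := by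
  haveI : NeZero (q - 1) := ⟨by omega⟩
  haveI := Fintype.ofFinite Kˣ
  classical
  obtain ⟨g, hg⟩ := IsCyclic.exists_generator (α := Kˣ)
  have horder : orderOf g = q - 1 := by
    rw [orderOf_eq_card_of_forall_mem_zpowers hg, Nat.card_units,
      Nat.card_eq_fintype_card, hq]
  intro b b' h
  funext j
  have h1 := congrFun h (Function.update (1 : Fin n → Kˣ) j g)
  simp only [auxChi_update] at h1
  have h2' : g ^ (b j).val = g ^ (b' j).val := by
    apply Units.ext
    rw [Units.val_pow_eq_pow_val, Units.val_pow_eq_pow_val]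
    exact h1
  have h3 : (b j).val = (b' j).val := by
    apply pow_injOn_Iio_orderOf _ _ h2'
    · exact Set.mem_Iio.2 (horder.symm ▸ ZMod.val_lt (b j))
    · exact Set.mem_Iio.2 (horder.symm ▸ ZMod.val_lt (b' j))
  exact ZMod.val_injective _ h3



-- vanishing transfer
lemma aux_vanish {K : Type*} [Field K] [Fintype K] {q n s : ℕ}
    (hq : Fintype.card K = q) (hs : 1 ≤ s) (v : Fin s → Fin n → ℕ)
    {f : MvPolynomial (Fin s) K} {d : ℕ} (hf : f.IsHomogeneous d)
    (hvan : ∀ P ∈ toricSet K v, MvPolynomial.eval P.rep f = 0)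
    (x : Fin n → Kˣ) :
    MvPolynomial.eval (fun i : Fin s => ∏ j, ((x j : K)) ^ v i j) f = 0 := by
  set y : Fin s → K := fun i => ∏ j, ((x j : K)) ^ v i j with hy
  have hyne : y ≠ 0 := by
    intro h0
    have h1 := congrFun h0 ⟨0, by omega⟩
    simp only [Pi.zero_apply, hy] at h1
    exact (Finset.prod_ne_zero_iff.2 fun j _ => pow_ne_zero _ (Units.ne_zero (x j))) h1
  have hmem : Projectivization.mk K y hyne ∈ toricSet K v :=
    ⟨fun j => (x j : K), fun j => (x j).ne_zero, hyne, rfl⟩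
  obtain ⟨u, hu⟩ := Projectivization.exists_smul_eq_mk_rep K y hyne
  have h0 := hvan _ hmem
  rw [← hu] at h0
  have heq : (MvPolynomial.eval (u • y)) f = (u : K) ^ d * MvPolynomial.eval y f := by
    have h2 : (u • y) = fun i => (u : K) * y i := by
      funext i; simp [Units.smul_def]
    rw [h2]; exact aux_eval_smul hf _ _
  rw [heq] at h0
  exact (mul_eq_zero.1 h0).resolve_left (pow_ne_zero _ u.ne_zero)

/-- The vanishing ideal `I(X)` of the toric set of a clutter equals the
ideal generated by the binomials `t^{a⁺} - t^{a⁻}` with `A a⁺ ≡ A a⁻ (mod q-1)`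
componentwise and `|a⁺| = |a⁻|`, where `A` is the incidence matrix. -/
theorem stmt15 {K : Type*} [Field K] [Fintype K] {q n s : ℕ}
    (hq : Fintype.card K = q) (hq3 : 3 ≤ q) (hs : 2 ≤ s)
    (v : Fin s → Fin n → ℕ) (hv : IsClutter v) :
    vanishingIdeal K (toricSet K v) =
      Ideal.span {f : MvPolynomial (Fin s) K | ∃ a : Fin s → ℤ,
        (∀ jj : Fin n, ((q : ℤ) - 1) ∣
          (∑ i, ((a i).toNat : ℤ) * (v i jj : ℤ)
            - ∑ i, (((-(a i)).toNat : ℤ)) * (v i jj : ℤ))) ∧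
        (∑ j, (a j).toNat = ∑ j, (-(a j)).toNat) ∧
        f = ∏ i, MvPolynomial.X i ^ (a i).toNat
          - ∏ i, MvPolynomial.X i ^ (-(a i)).toNat} := by
  unfold _root_.vanishingIdeal
  classical
  haveI : NeZero (q - 1) := ⟨by omega⟩
  have hqcast : ((q - 1 : ℕ) : ℤ) = (q : ℤ) - 1 := by
    have : 1 ≤ q := by omega
    push_cast [Nat.cast_sub this]; ring
  apply le_antisymm
  · -- vanishing polynomials lie in the binomial ideal
    apply Ideal.span_le.2
    rintro f ⟨⟨d, hf⟩, hvan⟩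
    set Jset : Set (MvPolynomial (Fin s) K) := {f | ∃ a : Fin s → ℤ,
        (∀ jj : Fin n, ((q : ℤ) - 1) ∣
          (∑ i, ((a i).toNat : ℤ) * (v i jj : ℤ)
            - ∑ i, (((-(a i)).toNat : ℤ)) * (v i jj : ℤ))) ∧
        (∑ j, (a j).toNat = ∑ j, (-(a j)).toNat) ∧
        f = ∏ i, MvPolynomial.X i ^ (a i).toNat
          - ∏ i, MvPolynomial.X i ^ (-(a i)).toNat} with hJset
    show f ∈ Ideal.span Jset
    set T := f.support with hT
    set φc : (Fin s →₀ ℕ) → (Fin n → ZMod (q - 1)) :=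
      fun c j => ((∑ i, c i * v i j : ℕ) : ZMod (q - 1)) with hφc
    -- binomial differences of monomials in the same class lie in the span
    have hbin : ∀ c ∈ T, ∀ c' ∈ T, φc c = φc c' →
        ((∏ i, (X i : MvPolynomial (Fin s) K) ^ c i) - ∏ i, X i ^ c' i) ∈
          Ideal.span Jset := by
      intro c hc c' hc' hcc
      set a : Fin s → ℤ := fun i => (c i : ℤ) - c' i with ha
      have hmem : ((∏ i, (X i : MvPolynomial (Fin s) K) ^ (a i).toNat)
          - ∏ i, X i ^ (-(a i)).toNat) ∈ Jset := by
        refine ⟨a, ?_, ?_, rfl⟩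
        · intro j
          have key : (∑ i, ((a i).toNat : ℤ) * (v i j : ℤ))
              - ∑ i, (((-(a i)).toNat : ℤ)) * (v i j : ℤ)
              = ((∑ i, c i * v i j : ℕ) : ℤ) - ((∑ i, c' i * v i j : ℕ) : ℤ) := by
            rw [← Finset.sum_sub_distrib]
            push_cast
            rw [← Finset.sum_sub_distrib]
            refine Finset.sum_congr rfl fun i _ => ?_
            rw [← sub_mul, Int.toNat_sub_toNat_neg]
            ring
          rw [key, ← hqcast]
          have hccj : ((∑ i, c i * v i j : ℕ) : ZMod (q - 1))
              = ((∑ i, c' i * v i j : ℕ) : ZMod (q - 1)) := congrFun hcc j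
          exact Nat.ModEq.dvd (((ZMod.natCast_eq_natCast_iff _ _ _).1 hccj).symm)
        · have h1 : ∑ i, c i = d := aux_deg hf hc
          have h2 : ∑ i, c' i = d := aux_deg hf hc'
          have key : ((∑ i, (a i).toNat : ℕ) : ℤ) = ((∑ i, (-(a i)).toNat : ℕ) : ℤ) := by
            push_cast
            rw [← sub_eq_zero, ← Finset.sum_sub_distrib]
            calc ∑ i, (((a i).toNat : ℤ) - ((-(a i)).toNat : ℤ))
                = ∑ i, ((c i : ℤ) - (c' i : ℤ)) :=
                  Finset.sum_congr rfl fun i _ => by rw [Int.toNat_sub_toNat_neg]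
              _ = 0 := by
                  rw [Finset.sum_sub_distrib]
                  have e1 : (∑ i, (c i : ℤ)) = (d : ℤ) := by exact_mod_cast h1
                  have e2 : (∑ i, (c' i : ℤ)) = (d : ℤ) := by exact_mod_cast h2
                  rw [e1, e2, sub_self]
          exact_mod_cast key
      have hfact : (∏ i, (X i : MvPolynomial (Fin s) K) ^ c i) - ∏ i, X i ^ c' i
          = (∏ i, X i ^ min (c i) (c' i)) *
            ((∏ i, X i ^ (a i).toNat) - ∏ i, X i ^ (-(a i)).toNat) := by
        rw [mul_sub, ← Finset.prod_mul_distrib, ← Finset.prod_mul_distrib]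
        congr 1
        · refine Finset.prod_congr rfl fun i _ => ?_
          rw [← pow_add]
          congr 1
          have h3 : (a i).toNat = c i - c' i := by
            rw [ha]; exact Int.toNat_sub _ _
          rw [h3]; omega
        · refine Finset.prod_congr rfl fun i _ => ?_
          rw [← pow_add]
          congr 1
          have h3 : (-(a i)).toNat = c' i - c i := by
            rw [ha]; simp only [neg_sub]; exact Int.toNat_sub _ _
          rw [h3]; omega
      rw [hfact]
      exact Ideal.mul_mem_left _ _ (Ideal.subset_span hmem)
    -- class sums of coefficients vanish
    have h23 : 2 ≤ q := by omega
    have hσ : ∀ b ∈ T.image φc,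
        (∑ c ∈ T.filter (fun c => φc c = b), coeff c f) = 0 := by
      have lin := (linearIndependent_monoidHom (Fin n → Kˣ) K).comp
        (fun b : Fin n → ZMod (q - 1) => auxChi (K := K) n (q - 1) b)
        (fun b b' hbb => auxChi_inj hq h23 (congrArg DFunLike.coe hbb))
      refine linearIndependent_iff'.1 lin (T.image φc)
        (fun b => ∑ c ∈ T.filter (fun c => φc c = b), coeff c f) ?_
      funext x
      simp only [Finset.sum_apply, Pi.smul_apply, Function.comp_apply, smul_eq_mul,
        Pi.zero_apply]
      have h0 := aux_vanish hq (by omega) v hf hvan x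
      rw [eval_eq'] at h0
      have hterm : ∀ c : Fin s →₀ ℕ, (∏ i, (∏ j, ((x j : K)) ^ v i j) ^ c i)
          = auxChi (K := K) n (q - 1) (φc c) x := by
        intro c
        rw [aux_eval_param, auxChi_apply]
        refine Finset.prod_congr rfl fun j _ => ?_
        rw [aux_pow_mod hq (Units.ne_zero (x j)), ZMod.val_natCast]
      simp only [hterm] at h0
      rw [← Finset.sum_fiberwise_of_maps_to (fun c hc => Finset.mem_image_of_mem φc hc)
        (fun c => coeff c f * auxChi (K := K) n (q - 1) (φc c) x)] at h0
      refine Eq.trans ?_ h0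
      refine Finset.sum_congr rfl fun b hb => ?_
      rw [Finset.sum_mul]
      refine Finset.sum_congr rfl fun c hc => ?_
      rw [(Finset.mem_filter.1 hc).2]
    -- representatives
    set wit : (Fin n → ZMod (q - 1)) → (Fin s →₀ ℕ) :=
      fun b => if h : ∃ c ∈ T, φc c = b then h.choose else 0 with hwitdef
    have hwit : ∀ c ∈ T, wit (φc c) ∈ T ∧ φc (wit (φc c)) = φc c := by
      intro c hc
      have h : ∃ c' ∈ T, φc c' = φc c := ⟨c, hc, rfl⟩
      simp only [hwitdef, dif_pos h]
      exact h.choose_spec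
    have hmono : ∀ (c : Fin s →₀ ℕ) (r : K),
        (monomial c r : MvPolynomial (Fin s) K) = C r * ∏ i, X i ^ c i := by
      intro c r
      rw [monomial_eq]
      congr 1
      exact Finsupp.prod_fintype _ _ fun i => pow_zero _
    have hrepr : f = ∑ c ∈ T, C (coeff c f) * ∏ i, X i ^ c i := by
      conv_lhs => rw [← support_sum_monomial_coeff f]
      exact Finset.sum_congr rfl fun c _ => hmono c _
    have hzero2 : (∑ c ∈ T, C (coeff c f) * ∏ i, (X i : MvPolynomial (Fin s) K)
        ^ (wit (φc c)) i) = 0 := by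
      rw [← Finset.sum_fiberwise_of_maps_to (fun c hc => Finset.mem_image_of_mem φc hc)
        (fun c => C (coeff c f) * ∏ i, (X i : MvPolynomial (Fin s) K) ^ (wit (φc c)) i)]
      refine Finset.sum_eq_zero fun b hb => ?_
      have hcongr : ∀ c ∈ T.filter (fun c => φc c = b),
          C (coeff c f) * (∏ i, (X i : MvPolynomial (Fin s) K) ^ (wit (φc c)) i)
          = C (coeff c f) * ∏ i, X i ^ (wit b) i := fun c hc => by
        rw [(Finset.mem_filter.1 hc).2]
      rw [Finset.sum_congr rfl hcongr, ← Finset.sum_mul, ← map_sum, hσ b hb, map_zero,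
        zero_mul]
    have hsplit : f = (∑ c ∈ T, C (coeff c f) *
        ((∏ i, X i ^ c i) - ∏ i, X i ^ (wit (φc c)) i))
        + ∑ c ∈ T, C (coeff c f) * ∏ i, X i ^ (wit (φc c)) i := by
      rw [← Finset.sum_add_distrib]
      simp_rw [mul_sub, sub_add_cancel]
      exact hrepr
    rw [hsplit]
    refine Ideal.add_mem _ ?_ ?_
    · exact Ideal.sum_mem _ fun c hc => Ideal.mul_mem_left _ _
        (hbin c hc _ (hwit c hc).1 (hwit c hc).2.symm)
    · rw [hzero2]; exact (Ideal.span Jset).zero_mem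
  · -- binomials vanish on the toric set
    apply Ideal.span_le.2
    rintro f ⟨a, hdvd, hdeg, rfl⟩
    apply Ideal.subset_span
    have h1 : (∏ i, (X i : MvPolynomial (Fin s) K) ^ (a i).toNat).IsHomogeneous
        (∑ i, (a i).toNat) :=
      IsHomogeneous.prod _ _ _ fun i _ => isHomogeneous_X_pow i _
    have h2 : (∏ i, (X i : MvPolynomial (Fin s) K) ^ (-(a i)).toNat).IsHomogeneous
        (∑ i, (a i).toNat) := by
      rw [hdeg]
      exact IsHomogeneous.prod _ _ _ fun i _ => isHomogeneous_X_pow i _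
    have hfhom : ((∏ i, (X i : MvPolynomial (Fin s) K) ^ (a i).toNat)
        - ∏ i, X i ^ (-(a i)).toNat).IsHomogeneous (∑ i, (a i).toNat) := h1.sub h2
    refine ⟨⟨_, hfhom⟩, ?_⟩
    rintro P ⟨x, hx, hyne, rfl⟩
    obtain ⟨u, hu⟩ := Projectivization.exists_smul_eq_mk_rep K _ hyne
    rw [← hu]
    have heq : (MvPolynomial.eval (u • fun i : Fin s => ∏ j, x j ^ v i j))
        ((∏ i, (X i : MvPolynomial (Fin s) K) ^ (a i).toNat)
          - ∏ i, X i ^ (-(a i)).toNat)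
        = (u : K) ^ (∑ i, (a i).toNat) *
          MvPolynomial.eval (fun i : Fin s => ∏ j, x j ^ v i j)
            ((∏ i, (X i : MvPolynomial (Fin s) K) ^ (a i).toNat)
              - ∏ i, X i ^ (-(a i)).toNat) := by
      have h2' : (u • fun i : Fin s => ∏ j, x j ^ v i j)
          = fun i => (u : K) * ∏ j, x j ^ v i j := by
        funext i; simp [Units.smul_def]
      rw [h2']; exact aux_eval_smul hfhom _ _
    rw [heq]
    have hzero : MvPolynomial.eval (fun i : Fin s => ∏ j, x j ^ v i j)
        ((∏ i, (X i : MvPolynomial (Fin s) K) ^ (a i).toNat)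
          - ∏ i, X i ^ (-(a i)).toNat) = 0 := by
      rw [map_sub, map_prod, map_prod]
      simp only [map_pow, eval_X]
      rw [aux_eval_param, aux_eval_param, sub_eq_zero]
      refine Finset.prod_congr rfl fun j _ => ?_
      refine aux_pow_eq hq (hx j) ?_
      · rw [ZMod.natCast_eq_natCast_iff]
        refine Nat.modEq_of_dvd ?_
        rw [hqcast]
        have := dvd_neg.mpr (hdvd j)
        rw [neg_sub] at this
        convert this using 1
        all_goals first | rfl | push_cast
        try ring
    rw [hzero, mul_zero]
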